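/- A unital algebra A over a commutative ring T is separable if and only if the first Hochschild cohomology H¹(A, M) vanishes for every (A,A)-bimodule M. -/

import Mathlib

set_option synthInstance.maxHeartbeats 1000000
set_option maxHeartbeats 1000000
set_option linter.unusedSectionVars false
open scoped TensorProduct
open MulOpposite

universe u v

variable {T : Type u} {A : Type v} [CommRing T] [Ring A] [Algebra T A]

/-- `A` as a module over its enveloping algebra `A^e = A ⊗[T] Aᵐᵒᵖ`. -/
noncomputable instance (priority := 100) aeModule : Module (A ⊗[T] Aᵐᵒᵖ) A :=
  TensorProduct.Algebra.module

noncomputable def muE : (A ⊗[T] Aᵐᵒᵖ) →ₗ[A ⊗[T] Aᵐᵒᵖ] A :=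
  LinearMap.toSpanSingleton _ _ 1

lemma muE_tmul (a : A) (b : Aᵐᵒᵖ) : muE (T := T) (a ⊗ₜ b) = a * unop b := by
  show (a ⊗ₜ[T] b) • (1 : A) = a * unop b
  show a • b • (1 : A) = a * unop b
  rw [MulOpposite.smul_eq_mul_unop, smul_eq_mul, one_mul]

lemma muE_surj : Function.Surjective (muE (T := T) (A := A)) := fun a =>
  ⟨a ⊗ₜ 1, by simp [muE_tmul]⟩

section psi

variable (M : Type (max u v)) [AddCommGroup M] [Module T M] [Module A M]
    [Module Aᵐᵒᵖ M] [IsScalarTower T A M] [IsScalarTower T Aᵐᵒᵖ M]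
    [SMulCommClass A Aᵐᵒᵖ M]

noncomputable def psi (d : A →ₗ[T] M) : (A ⊗[T] Aᵐᵒᵖ) →ₗ[T] M :=
  TensorProduct.lift (LinearMap.mk₂ T (fun a b => a • d (unop b))
    (fun a a' b => add_smul a a' _)
    (fun t a b => smul_assoc t a _)
    (fun a b b' => by rw [unop_add, map_add, smul_add])
    (fun t a b => by rw [unop_smul, map_smul, smul_comm]))

variable {M}

lemma psi_tmul (d : A →ₗ[T] M) (a : A) (b : Aᵐᵒᵖ) :
    psi M d (a ⊗ₜ b) = a • d (unop b) := rfl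

lemma psi_L1 (d : A →ₗ[T] M) (x : A) (s : A ⊗[T] Aᵐᵒᵖ) :
    psi M d ((x ⊗ₜ (1:Aᵐᵒᵖ)) * s) = x • psi M d s := by
  induction s using TensorProduct.induction_on with
  | zero => simp
  | tmul a b =>
      rw [Algebra.TensorProduct.tmul_mul_tmul, one_mul, psi_tmul, psi_tmul, mul_smul]
  | add s t hs ht => rw [mul_add, map_add, hs, ht, map_add, smul_add]

lemma psi_L2 (d : A →ₗ[T] M) (hd : ∀ x y : A, d (x * y) = x • d y + op y • d x)
    (x : A) (s : A ⊗[T] Aᵐᵒᵖ) :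
    op x • psi M d s = psi M d (((1:A) ⊗ₜ op x) * s) - (muE s) • d x := by
  induction s using TensorProduct.induction_on with
  | zero => simp
  | tmul a b =>
      rw [Algebra.TensorProduct.tmul_mul_tmul, one_mul, psi_tmul, psi_tmul, muE_tmul]
      have : op x • d (unop b) = d (unop b * x) - unop b • d x := by
        rw [hd (unop b) x]; abel
      rw [← smul_comm a (op x), this, smul_sub, unop_mul, unop_op, mul_smul]
  | add s t hs ht =>
      rw [map_add, smul_add, hs, ht, mul_add, map_add, map_add, add_smul]
      abel

end psi

set_option linter.unusedSectionVars false

lemma smul_one_eq (x : A) (b : Aᵐᵒᵖ) : ((x ⊗ₜ[T] b) : A ⊗[T] Aᵐᵒᵖ) • (1:A) = x * unop b :=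
  muE_tmul x b

theorem fwd (hproj : Module.Projective (A ⊗[T] Aᵐᵒᵖ) A)
    (M : Type (max u v)) [AddCommGroup M] [Module T M] [Module A M]
    [Module Aᵐᵒᵖ M] [IsScalarTower T A M] [IsScalarTower T Aᵐᵒᵖ M]
    [SMulCommClass A Aᵐᵒᵖ M]
    (d : A →ₗ[T] M) (hd : ∀ x y : A, d (x * y) = x • d y + op y • d x) :
    ∃ m : M, ∀ x : A, d x = x • m - op x • m := by
  obtain ⟨σ, hσ⟩ := Module.projective_lifting_property (h := hproj)
    (muE (T := T) (A := A)) LinearMap.id muE_surj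
  have hσ' : ∀ a : A, muE (σ a) = a := fun a => congrArg (fun f => f a) hσ
  set e := σ 1 with he
  have key : ∀ x : A, (x ⊗ₜ[T] (1:Aᵐᵒᵖ)) * e = ((1:A) ⊗ₜ[T] op x) * e := by
    intro x
    have h1 : ((x ⊗ₜ[T] (1:Aᵐᵒᵖ)) : A ⊗[T] Aᵐᵒᵖ) • (1:A) = x := by
      rw [smul_one_eq, unop_one, mul_one]
    have h2 : (((1:A) ⊗ₜ[T] op x) : A ⊗[T] Aᵐᵒᵖ) • (1:A) = x := by
      rw [smul_one_eq, unop_op, one_mul]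
    calc (x ⊗ₜ[T] (1:Aᵐᵒᵖ)) * e = (x ⊗ₜ[T] (1:Aᵐᵒᵖ)) • σ 1 := rfl
      _ = σ ((x ⊗ₜ[T] (1:Aᵐᵒᵖ)) • (1:A)) := (map_smul σ _ _).symm
      _ = σ ((((1:A) ⊗ₜ[T] op x) : A ⊗[T] Aᵐᵒᵖ) • (1:A)) := by rw [h1, h2]
      _ = ((1:A) ⊗ₜ[T] op x) • σ 1 := map_smul σ _ _
      _ = ((1:A) ⊗ₜ[T] op x) * e := rfl
  refine ⟨psi M d e, fun x => ?_⟩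
  rw [← psi_L1 d x e, psi_L2 d hd x e, key x, hσ']
  simp

/-- The kernel of the multiplication map, as a fresh type so that we control all instances. -/
noncomputable def Jc (T : Type u) (A : Type v) [CommRing T] [Ring A] [Algebra T A] : Type v :=
  ↥(LinearMap.ker (muE (T := T) (A := A)))

noncomputable instance : AddCommGroup (Jc T A) :=
  inferInstanceAs (AddCommGroup ↥(LinearMap.ker (muE (T := T) (A := A))))

noncomputable instance : Module (A ⊗[T] Aᵐᵒᵖ) (Jc T A) :=
  inferInstanceAs (Module (A ⊗[T] Aᵐᵒᵖ) ↥(LinearMap.ker (muE (T := T) (A := A))))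

noncomputable instance : Module T (Jc T A) :=
  inferInstanceAs (Module T ↥(LinearMap.ker (muE (T := T) (A := A))))

noncomputable instance : Module A (Jc T A) :=
  Module.compHom _ (Algebra.TensorProduct.includeLeftRingHom : A →+* A ⊗[T] Aᵐᵒᵖ)

noncomputable instance : Module Aᵐᵒᵖ (Jc T A) :=
  Module.compHom _ (Algebra.TensorProduct.includeRight (R := T) (A := A) (B := Aᵐᵒᵖ)).toRingHom

/-- The underlying element of the enveloping algebra. -/
noncomputable def Jc.val (j : Jc T A) : A ⊗[T] Aᵐᵒᵖ := Subtype.val j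

lemma Jc.val_injective : Function.Injective (Jc.val (T := T) (A := A)) :=
  fun _ _ h => Subtype.ext h

lemma Jc.ker_val (j : Jc T A) : muE j.val = 0 := j.2

lemma Jc.val_add (j k : Jc T A) : (j + k).val = j.val + k.val := rfl

lemma Jc.val_sub (j k : Jc T A) : (j - k).val = j.val - k.val := rfl

lemma Jc.val_smulT (t : T) (j : Jc T A) : (t • j).val = t • j.val := rfl

lemma Jc.val_smulA (a : A) (j : Jc T A) :
    (a • j).val = (a ⊗ₜ (1:Aᵐᵒᵖ)) * j.val := rfl

lemma Jc.val_smulAop (b : Aᵐᵒᵖ) (j : Jc T A) :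
    (b • j).val = ((1:A) ⊗ₜ b) * j.val := rfl

noncomputable instance : IsScalarTower T A (Jc T A) := ⟨by
  intro t a j
  apply Jc.val_injective
  rw [Jc.val_smulA, Jc.val_smulT, Jc.val_smulA]
  show ((t • a) ⊗ₜ (1:Aᵐᵒᵖ)) * j.val = t • ((a ⊗ₜ (1:Aᵐᵒᵖ)) * j.val)
  rw [← TensorProduct.smul_tmul', smul_mul_assoc]⟩

noncomputable instance : IsScalarTower T Aᵐᵒᵖ (Jc T A) := ⟨by
  intro t b j
  apply Jc.val_injective
  rw [Jc.val_smulAop, Jc.val_smulT, Jc.val_smulAop]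
  show ((1:A) ⊗ₜ (t • b)) * j.val = t • (((1:A) ⊗ₜ b) * j.val)
  rw [TensorProduct.tmul_smul, smul_mul_assoc]⟩

noncomputable instance : SMulCommClass A Aᵐᵒᵖ (Jc T A) := ⟨by
  intro a b j
  apply Jc.val_injective
  rw [Jc.val_smulA, Jc.val_smulAop, Jc.val_smulAop, Jc.val_smulA, ← mul_assoc, ← mul_assoc,
    Algebra.TensorProduct.tmul_mul_tmul, Algebra.TensorProduct.tmul_mul_tmul,
    one_mul, mul_one, one_mul, mul_one]⟩

noncomputable instance : SMulCommClass A Aᵐᵒᵖ (ULift.{u} (Jc T A)) := ⟨by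
  intro a b m
  apply ULift.ext
  exact smul_comm a b m.down⟩

theorem bwd
    (H : ∀ (M : Type (max u v)) [AddCommGroup M] [Module T M] [Module A M]
        [Module Aᵐᵒᵖ M] [IsScalarTower T A M] [IsScalarTower T Aᵐᵒᵖ M]
        [SMulCommClass A Aᵐᵒᵖ M],
        ∀ d : A →ₗ[T] M, (∀ x y : A, d (x * y) = x • d y + op y • d x) →
          ∃ m : M, ∀ x : A, d x = x • m - op x • m) :
    Module.Projective (A ⊗[T] Aᵐᵒᵖ) A := by
  classical
  have hmem : ∀ a : A, muE (a ⊗ₜ[T] (1:Aᵐᵒᵖ) - (1:A) ⊗ₜ[T] op a) = 0 := by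
    intro a
    simp only [map_sub, muE_tmul, unop_one, mul_one, unop_op, one_mul, sub_self]
  set d : A →ₗ[T] ULift.{u} (Jc T A) :=
    { toFun := fun a => ⟨⟨a ⊗ₜ (1:Aᵐᵒᵖ) - (1:A) ⊗ₜ op a, hmem a⟩⟩
      map_add' := by
        intro a b
        apply ULift.ext
        apply Jc.val_injective
        show (a + b) ⊗ₜ (1:Aᵐᵒᵖ) - (1:A) ⊗ₜ op (a + b) =
          (a ⊗ₜ (1:Aᵐᵒᵖ) - (1:A) ⊗ₜ op a) + (b ⊗ₜ (1:Aᵐᵒᵖ) - (1:A) ⊗ₜ op b)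
        rw [op_add, TensorProduct.add_tmul, TensorProduct.tmul_add]
        abel
      map_smul' := by
        intro t a
        apply ULift.ext
        apply Jc.val_injective
        show (t • a) ⊗ₜ (1:Aᵐᵒᵖ) - (1:A) ⊗ₜ op (t • a) =
          t • (a ⊗ₜ (1:Aᵐᵒᵖ) - (1:A) ⊗ₜ op a)
        rw [op_smul, ← TensorProduct.smul_tmul', TensorProduct.tmul_smul, smul_sub] } with hdd
  have hleib : ∀ x y : A, d (x * y) = x • d y + op y • d x := by
    intro x y
    apply ULift.ext
    apply Jc.val_injective
    show (x * y) ⊗ₜ (1:Aᵐᵒᵖ) - (1:A) ⊗ₜ op (x * y) =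
      ((x ⊗ₜ (1:Aᵐᵒᵖ)) * (y ⊗ₜ (1:Aᵐᵒᵖ) - (1:A) ⊗ₜ op y)) +
      (((1:A) ⊗ₜ op y) * (x ⊗ₜ (1:Aᵐᵒᵖ) - (1:A) ⊗ₜ op x))
    rw [mul_sub, mul_sub, Algebra.TensorProduct.tmul_mul_tmul,
      Algebra.TensorProduct.tmul_mul_tmul, Algebra.TensorProduct.tmul_mul_tmul,
      Algebra.TensorProduct.tmul_mul_tmul, mul_one, one_mul, mul_one, one_mul,
      one_mul, mul_one, ← op_mul]
    abel
  obtain ⟨m, hm⟩ := H (ULift.{u} (Jc T A)) d hleib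
  set m₀ : A ⊗[T] Aᵐᵒᵖ := (m.down : Jc T A).val with hm₀
  have hker : muE m₀ = 0 := Jc.ker_val _
  have hmval : ∀ x : A,
      x ⊗ₜ (1:Aᵐᵒᵖ) - (1:A) ⊗ₜ op x =
        (x ⊗ₜ (1:Aᵐᵒᵖ)) * m₀ - ((1:A) ⊗ₜ op x) * m₀ := by
    intro x
    have h := congrArg (fun z : ULift.{u} (Jc T A) => z.down.val) (hm x)
    simp only [ULift.sub_down, ULift.smul_down, Jc.val_sub, Jc.val_smulA, Jc.val_smulAop] at h
    exact h
  set e : A ⊗[T] Aᵐᵒᵖ := 1 - m₀ with he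
  have hμe : muE e = 1 := by rw [he, map_sub, hker, sub_zero]; exact one_smul _ _
  have hkey : ∀ x : A, (x ⊗ₜ (1:Aᵐᵒᵖ)) * e = ((1:A) ⊗ₜ op x) * e := by
    intro x
    rw [he, mul_sub, mul_sub, mul_one, mul_one, sub_eq_sub_iff_sub_eq_sub]
    exact hmval x
  set σ : A →ₗ[A ⊗[T] Aᵐᵒᵖ] (A ⊗[T] Aᵐᵒᵖ) :=
    { toFun := fun a => (a ⊗ₜ (1:Aᵐᵒᵖ)) * e
      map_add' := by
        intro a b
        rw [TensorProduct.add_tmul, add_mul]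
      map_smul' := by
        intro s x
        show ((s • x) ⊗ₜ (1:Aᵐᵒᵖ)) * e = s * ((x ⊗ₜ (1:Aᵐᵒᵖ)) * e)
        induction s using TensorProduct.induction_on with
        | zero =>
            have h0 : (0 : A ⊗[T] Aᵐᵒᵖ) • x = 0 := by convert zero_smul (A ⊗[T] Aᵐᵒᵖ) x
            rw [h0, zero_mul, TensorProduct.zero_tmul, zero_mul]
        | tmul a b =>
            have hkey' : ((unop b) ⊗ₜ[T] (1:Aᵐᵒᵖ)) * e = ((1:A) ⊗ₜ[T] b) * e := by
              have h := hkey (unop b); rwa [op_unop] at h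
            have hs : (a ⊗ₜ[T] b) • x = a * (x * unop b) := rfl
            have h2 : a ⊗ₜ[T] b * (x ⊗ₜ[T] (1:Aᵐᵒᵖ) * e) = ((a*x) ⊗ₜ[T] b) * e := by
              rw [← mul_assoc, Algebra.TensorProduct.tmul_mul_tmul, mul_one]
            have h1 : (a * x) ⊗ₜ[T] b = ((a * x) ⊗ₜ[T] (1:Aᵐᵒᵖ)) * ((1:A) ⊗ₜ[T] b) := by
              rw [Algebra.TensorProduct.tmul_mul_tmul, mul_one, one_mul]
            rw [hs, h2, h1, mul_assoc, ← hkey',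
              ← mul_assoc ((a*x) ⊗ₜ[T] (1:Aᵐᵒᵖ)) ((unop b) ⊗ₜ[T] (1:Aᵐᵒᵖ)) e,
              Algebra.TensorProduct.tmul_mul_tmul, mul_one, mul_assoc a x (unop b)]
        | add s t hs ht =>
            rw [add_smul, TensorProduct.add_tmul, add_mul, hs, ht, add_mul] } with hσ
  have hsplit : (muE (T := T) (A := A)).comp σ = LinearMap.id := by
    apply LinearMap.ext
    intro x
    show muE ((x ⊗ₜ (1:Aᵐᵒᵖ)) * e) = x
    have hh : (x ⊗ₜ[T] (1:Aᵐᵒᵖ)) * e = (x ⊗ₜ[T] (1:Aᵐᵒᵖ)) • e := rfl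
    rw [hh, map_smul, hμe, smul_one_eq, unop_one, mul_one]
  exact Module.Projective.of_split σ muE hsplit


/-- `A` is separable over `T` iff the first Hochschild cohomology
`H¹(A,M)` vanishes for every `(A,A)`-bimodule `M`, i.e. iff every derivation
of `A` with values in any bimodule `M` is inner. -/
theorem separable_iff_H1_vanishes :
    Module.Projective (A ⊗[T] Aᵐᵒᵖ) A ↔
      ∀ (M : Type (max u v)) [AddCommGroup M] [Module T M] [Module A M]
        [Module Aᵐᵒᵖ M] [IsScalarTower T A M] [IsScalarTower T Aᵐᵒᵖ M]
        [SMulCommClass A Aᵐᵒᵖ M],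
        ∀ d : A →ₗ[T] M, (∀ x y : A, d (x * y) = x • d y + op y • d x) →
          ∃ m : M, ∀ x : A, d x = x • m - op x • m := by
  constructor
  · intro h M _ _ _ _ _ _ _ d hd
    exact fwd h M d hd
  · exact bwd
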